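/- Let M be a topological space and ≪ a binary relation on M with open pasts and open futures, and let μ be a finite Borel measure on M with full support (μ(W) > 0 for every nonempty open set W ⊆ M). If U and V are past sets with U ⊆ V, then μ(U) = μ(V) implies U = V. -/

import Mathlib

open Set Filter Topology MeasureTheory

/-- The chronological past of a set `A` with respect to relation `r`. -/
def chronPast {M : Type*} (r : M → M → Prop) (A : Set M) : Set M :=
  {x | ∃ y ∈ A, r x y}

/-- The chronological future of a set `A` with respect to relation `r`. -/
def chronFut {M : Type*} (r : M → M → Prop) (A : Set M) : Set M :=
  {x | ∃ y ∈ A, r y x}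

/-- A past set: `I⁻(U) = U`. -/
def IsPastSet {M : Type*} (r : M → M → Prop) (U : Set M) : Prop :=
  chronPast r U = U

/-- A future set: `I⁺(U) = U`. -/
def IsFutureSet {M : Type*} (r : M → M → Prop) (U : Set M) : Prop :=
  chronFut r U = U

/-- An indecomposable past set (IP): a nonempty past set that is not the union of
two past sets, each a proper subset of it. -/
def IsIP {M : Type*} (r : M → M → Prop) (U : Set M) : Prop :=
  U.Nonempty ∧ IsPastSet r U ∧
    ¬ ∃ A B : Set M, IsPastSet r A ∧ IsPastSet r B ∧ A ⊂ U ∧ B ⊂ U ∧ A ∪ B = U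

/-- An indecomposable future set (IF). -/
def IsIF {M : Type*} (r : M → M → Prop) (U : Set M) : Prop :=
  U.Nonempty ∧ IsFutureSet r U ∧
    ¬ ∃ A B : Set M, IsFutureSet r A ∧ IsFutureSet r B ∧ A ⊂ U ∧ B ⊂ U ∧ A ∪ B = U

/-- A terminal indecomposable past set (TIP): an IP not of the form `I⁻(p)`. -/
def IsTIP {M : Type*} (r : M → M → Prop) (U : Set M) : Prop :=
  IsIP r U ∧ ∀ p : M, U ≠ chronPast r {p}

/-- A terminal indecomposable future set (TIF): an IF not of the form `I⁺(p)`. -/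
def IsTIF {M : Type*} (r : M → M → Prop) (U : Set M) : Prop :=
  IsIF r U ∧ ∀ p : M, U ≠ chronFut r {p}

/-- A minimal TIP: a TIP containing no TIP as a proper subset. -/
def IsMinTIP {M : Type*} (r : M → M → Prop) (U : Set M) : Prop :=
  IsTIP r U ∧ ∀ V : Set M, IsTIP r V → V ⊆ U → V = U

lemma pastSet_isOpen {M : Type*} [TopologicalSpace M] {r : M → M → Prop}
    (hOpenPast : ∀ p : M, IsOpen (chronPast r {p})) {U : Set M} (hU : IsPastSet r U) :
    IsOpen U := by
  rw [← hU]
  have : chronPast r U = ⋃ y ∈ U, chronPast r {y} := by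
    ext x; simp [chronPast]
  rw [this]
  exact isOpen_biUnion fun y _ => hOpenPast y

/-- A finite Borel measure of full support distinguishes nested past sets. -/
theorem stmt_4 {M : Type*} [TopologicalSpace M] [MeasurableSpace M] [BorelSpace M]
    (r : M → M → Prop)
    (hOpenPast : ∀ p : M, IsOpen (chronPast r {p}))
    (hOpenFut : ∀ p : M, IsOpen (chronFut r {p}))
    (μ : Measure M) [IsFiniteMeasure μ]
    (hfull : ∀ W : Set M, IsOpen W → W.Nonempty → 0 < μ W)
    (U V : Set M) (hU : IsPastSet r U) (hV : IsPastSet r V)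
    (hUV : U ⊆ V) (hμ : μ U = μ V) :
    U = V := by
  by_contra hne
  obtain ⟨p, hpV, hpU⟩ : ∃ p, p ∈ V ∧ p ∉ U := by
    by_contra h
    push_neg at h
    exact hne (Subset.antisymm hUV h)
  obtain ⟨q, hqV, hpq⟩ : ∃ q ∈ V, r p q := by
    have : p ∈ chronPast r V := by rw [hV]; exact hpV
    exact this
  set W := chronFut r {p} ∩ V with hWdef
  have hWopen : IsOpen W :=
    (hOpenFut p).inter (pastSet_isOpen hOpenPast hV)
  have hWne : W.Nonempty := ⟨q, ⟨p, rfl, hpq⟩, hqV⟩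
  have hWsub : W ⊆ V \ U := by
    rintro x ⟨⟨y, hy, hrx⟩, hxV⟩
    refine ⟨hxV, fun hxU => hpU ?_⟩
    rw [Set.mem_singleton_iff] at hy
    subst hy
    rw [← hU]
    exact ⟨x, hxU, hrx⟩
  have hUopen : IsOpen U := pastSet_isOpen hOpenPast hU
  have hdiff : μ (V \ U) = 0 := by
    rw [measure_diff hUV hUopen.measurableSet.nullMeasurableSet (measure_ne_top μ U), hμ,
      tsub_self]
  have := hfull W hWopen hWne
  have hle : μ W ≤ μ (V \ U) := measure_mono hWsub
  rw [hdiff] at hle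
  exact absurd (le_antisymm hle zero_le) (by simpa using this.ne')
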